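/- Let P_λ be the probability measure on ℝ with density (1/(2√(2πt)))·( e^{-(x-√(2λ)t)²/(2t)} + e^{-(x+√(2λ)t)²/(2t)} ) for fixed t > 0. Then for 0 ≤ λ₁ ≤ λ₂ and every convex function u : ℝ → ℝ (integrable w.r.t. both measures), ∫ u dP_{λ₁} ≤ ∫ u dP_{λ₂}. -/

import Mathlib

open Real MeasureTheory

noncomputable def ballisticDensity (t l x : ℝ) : ℝ :=
  1 / (2 * Real.sqrt (2 * π * t)) *
    (Real.exp (-(x - Real.sqrt (2 * l) * t) ^ 2 / (2 * t)) +
     Real.exp (-(x + Real.sqrt (2 * l) * t) ^ 2 / (2 * t)))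

noncomputable def ballisticMeasure (t l : ℝ) : Measure ℝ :=
  volume.withDensity (fun x => ENNReal.ofReal (ballisticDensity t l x))

lemma convex_pair_mono {u : ℝ → ℝ} (hu : ConvexOn ℝ Set.univ u) {m₁ m₂ : ℝ}
    (h0 : 0 ≤ m₁) (h : m₁ ≤ m₂) (x : ℝ) :
    u (x + m₁) + u (x - m₁) ≤ u (x + m₂) + u (x - m₂) := by
  rcases eq_or_lt_of_le (h0.trans h) with hm2 | hm2
  · have h1 : m₁ = 0 := le_antisymm (h.trans hm2.symm.le) h0
    simp [h1, ← hm2]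
  · have hs0 : 0 ≤ m₁ / m₂ := div_nonneg h0 hm2.le
    have hs1 : m₁ / m₂ ≤ 1 := (div_le_one hm2).2 h
    set a := (1 + m₁ / m₂) / 2 with ha_def
    set b := (1 - m₁ / m₂) / 2 with hb_def
    have ha : 0 ≤ a := by rw [ha_def]; linarith
    have hb : 0 ≤ b := by rw [hb_def]; linarith
    have hab : a + b = 1 := by rw [ha_def, hb_def]; ring
    have harg1 : a * (x + m₂) + b * (x - m₂) = x + m₁ := by
      rw [ha_def, hb_def]; field_simp; ring
    have harg2 : b * (x + m₂) + a * (x - m₂) = x - m₁ := by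
      rw [ha_def, hb_def]; field_simp; ring
    have k1 := hu.2 (Set.mem_univ (x + m₂)) (Set.mem_univ (x - m₂)) ha hb hab
    have k2 := hu.2 (Set.mem_univ (x + m₂)) (Set.mem_univ (x - m₂)) hb ha
      (by rw [add_comm]; exact hab)
    simp only [smul_eq_mul] at k1 k2
    rw [harg1] at k1
    rw [harg2] at k2
    have hcomb : a * u (x + m₂) + b * u (x - m₂) + (b * u (x + m₂) + a * u (x - m₂))
        = (a + b) * (u (x + m₂) + u (x - m₂)) := by ring
    rw [hab, one_mul] at hcomb
    linarith

lemma ballistic_repr (t : ℝ) (ht : 0 < t) (l : ℝ) (u : ℝ → ℝ)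
    (hInt : Integrable u (ballisticMeasure t l)) :
    Integrable (fun x => 1 / (2 * Real.sqrt (2 * π * t)) * Real.exp (-x ^ 2 / (2 * t)) *
        (u (x + Real.sqrt (2 * l) * t) + u (x - Real.sqrt (2 * l) * t))) volume ∧
    (∫ x, u x ∂(ballisticMeasure t l)) =
      ∫ x, 1 / (2 * Real.sqrt (2 * π * t)) * Real.exp (-x ^ 2 / (2 * t)) *
        (u (x + Real.sqrt (2 * l) * t) + u (x - Real.sqrt (2 * l) * t)) := by
  have hπt : 0 < 2 * π * t := by positivity
  have hsq : 0 < Real.sqrt (2 * π * t) := Real.sqrt_pos.2 hπt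
  set c : ℝ := 1 / (2 * Real.sqrt (2 * π * t)) with hc
  set m : ℝ := Real.sqrt (2 * l) * t with hm
  have hc0 : 0 < c := by rw [hc]; positivity
  set e₁ : ℝ → ℝ := fun x => Real.exp (-(x - m) ^ 2 / (2 * t)) with he₁
  set e₂ : ℝ → ℝ := fun x => Real.exp (-(x + m) ^ 2 / (2 * t)) with he₂
  have hd : ∀ x, ballisticDensity t l x = c * (e₁ x + e₂ x) := fun x => rfl
  have hd0 : ∀ x, 0 ≤ ballisticDensity t l x := fun x => by
    rw [hd x]; positivity
  have hce₁ : Continuous e₁ := by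
    rw [he₁]; fun_prop
  have hce₂ : Continuous e₂ := by
    rw [he₂]; fun_prop
  have hcont : Continuous (ballisticDensity t l) := by
    have : ballisticDensity t l = fun x => c * (e₁ x + e₂ x) := funext hd
    rw [this]; fun_prop
  have hden : ∀ x, 0 < e₁ x + e₂ x := fun x => by
    rw [he₁, he₂]; positivity
  have hUD : Integrable (fun x => u x * ballisticDensity t l x) volume := by
    have h := (integrable_withDensity_iff (hcont.measurable.ennreal_ofReal)
      (ae_of_all _ fun x => ENNReal.ofReal_lt_top)).1 hInt
    exact h.congr (ae_of_all _ fun x => by simp [ENNReal.toReal_ofReal (hd0 x)])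
  -- integrability of the two pieces
  have ratio_bound : ∀ (e : ℝ → ℝ), (∀ x, 0 ≤ e x) → (∀ x, e x ≤ e₁ x + e₂ x) →
      Continuous e → Integrable (fun x => c * e x * u x) volume := by
    intro e he0 hele hcc
    have heq : (fun x => c * e x * u x)
        = fun x => (u x * ballisticDensity t l x) * (e x / (e₁ x + e₂ x)) := by
      funext x
      rw [hd x]
      field_simp [(hden x).ne']
    rw [heq]
    have hmeas : AEStronglyMeasurable
        (fun x => (u x * ballisticDensity t l x) * (e x / (e₁ x + e₂ x))) volume :=
      hUD.aestronglyMeasurable.mul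
        ((hcc.div (hce₁.add hce₂) fun x => (hden x).ne').aestronglyMeasurable)
    refine hUD.mono hmeas (ae_of_all _ fun x => ?_)
    rw [norm_mul]
    have h1 : ‖e x / (e₁ x + e₂ x)‖ ≤ 1 := by
      rw [Real.norm_eq_abs, abs_of_nonneg (div_nonneg (he0 x) (hden x).le)]
      rw [div_le_one (hden x)]
      exact hele x
    calc ‖u x * ballisticDensity t l x‖ * ‖e x / (e₁ x + e₂ x)‖
        ≤ ‖u x * ballisticDensity t l x‖ * 1 :=
          mul_le_mul_of_nonneg_left h1 (norm_nonneg _)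
      _ = ‖u x * ballisticDensity t l x‖ := mul_one _
  have hp₁ : Integrable (fun x => c * e₁ x * u x) volume :=
    ratio_bound e₁ (fun x => Real.exp_nonneg _)
      (fun x => le_add_of_nonneg_right (Real.exp_nonneg _)) hce₁
  have hp₂ : Integrable (fun x => c * e₂ x * u x) volume :=
    ratio_bound e₂ (fun x => Real.exp_nonneg _)
      (fun x => le_add_of_nonneg_left (Real.exp_nonneg _)) hce₂
  -- translation identities
  have he₁' : ∀ x : ℝ, e₁ (x + m) = Real.exp (-x ^ 2 / (2 * t)) := fun x => by
    rw [he₁]; simp [add_sub_cancel_right]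
  have he₂' : ∀ x : ℝ, e₂ (x - m) = Real.exp (-x ^ 2 / (2 * t)) := fun x => by
    rw [he₂]; simp [sub_add_cancel]
  have hq₁ : Integrable (fun x => c * Real.exp (-x ^ 2 / (2 * t)) * u (x + m)) volume := by
    have h := hp₁.comp_add_right m
    exact h.congr (ae_of_all _ fun x => by simp only [he₁' x])
  have hq₂ : Integrable (fun x => c * Real.exp (-x ^ 2 / (2 * t)) * u (x - m)) volume := by
    have h := hp₂.comp_sub_right m
    exact h.congr (ae_of_all _ fun x => by simp only [he₂' x])
  have hq : Integrable (fun x => c * Real.exp (-x ^ 2 / (2 * t)) * (u (x + m) + u (x - m)))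
      volume := by
    have h := hq₁.add hq₂
    exact h.congr (ae_of_all _ fun x => by simp only [Pi.add_apply]; ring)
  refine ⟨hq, ?_⟩
  have I1 : ∫ x, c * e₁ x * u x = ∫ x, c * Real.exp (-x ^ 2 / (2 * t)) * u (x + m) := by
    rw [← integral_add_right_eq_self (fun y => c * e₁ y * u y) m]
    congr 1
    funext x
    simp only [he₁' x]
  have I2 : ∫ x, c * e₂ x * u x = ∫ x, c * Real.exp (-x ^ 2 / (2 * t)) * u (x - m) := by
    rw [← integral_sub_right_eq_self (fun y => c * e₂ y * u y) m]
    congr 1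
    funext x
    simp only [he₂' x]
  have step2 : (∫ x, u x ∂(ballisticMeasure t l)) = ∫ x, u x * ballisticDensity t l x := by
    have key := integral_withDensity_eq_integral_smul (μ := volume)
      hcont.measurable.real_toNNReal u
    have hmeq : ballisticMeasure t l
        = volume.withDensity fun x => ((ballisticDensity t l x).toNNReal : ENNReal) := rfl
    rw [hmeq, key]
    congr 1
    funext x
    rw [NNReal.smul_def, Real.coe_toNNReal _ (hd0 x), smul_eq_mul, mul_comm]
  rw [step2]
  have hsum : ∫ x, u x * ballisticDensity t l x
      = ∫ x, (c * e₁ x * u x + c * e₂ x * u x) := by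
    congr 1
    funext x
    rw [hd x]
    ring
  rw [hsum, integral_add hp₁ hp₂, I1, I2, ← integral_add hq₁ hq₂]
  congr 1
  funext x
  ring

theorem ballistic_convex_order (t : ℝ) (ht : 0 < t) (l₁ l₂ : ℝ)
    (h₁ : 0 ≤ l₁) (h₁₂ : l₁ ≤ l₂) (u : ℝ → ℝ)
    (hu : ConvexOn ℝ Set.univ u)
    (hInt₁ : Integrable u (ballisticMeasure t l₁))
    (hInt₂ : Integrable u (ballisticMeasure t l₂)) :
    (∫ x, u x ∂(ballisticMeasure t l₁)) ≤ ∫ x, u x ∂(ballisticMeasure t l₂) := by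
  obtain ⟨hq₁, hr₁⟩ := ballistic_repr t ht l₁ u hInt₁
  obtain ⟨hq₂, hr₂⟩ := ballistic_repr t ht l₂ u hInt₂
  rw [hr₁, hr₂]
  refine integral_mono hq₁ hq₂ fun x => ?_
  have hm0 : 0 ≤ Real.sqrt (2 * l₁) * t := by positivity
  have hmm : Real.sqrt (2 * l₁) * t ≤ Real.sqrt (2 * l₂) * t :=
    mul_le_mul_of_nonneg_right (Real.sqrt_le_sqrt (by linarith)) ht.le
  have hpi : 0 < 2 * π * t := by positivity
  have hg0 : 0 ≤ 1 / (2 * Real.sqrt (2 * π * t)) * Real.exp (-x ^ 2 / (2 * t)) := by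
    positivity
  exact mul_le_mul_of_nonneg_left (convex_pair_mono hu hm0 hmm x) hg0
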